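/- Let K = ℚ(√−7). On the elliptic curve over K defined by y² + ((85 + 33√−7)/128)·x·y + ((85√−7 − 999)/16384)·y = x³ + ((89√−7 − 275)/4096)·x², the point (0, 0) is a torsion point of order 11. -/

import Mathlib

open WeierstrassCurve Polynomial

lemma some_congr' {F : Type*} [Field F] {W : WeierstrassCurve.Affine F} {x₁ y₁ x₂ y₂ : F}
    {h₁ : W.Nonsingular x₁ y₁} {h₂ : W.Nonsingular x₂ y₂} (hx : x₁ = x₂) (hy : y₁ = y₂) :
    WeierstrassCurve.Affine.Point.some _ _ h₁ = WeierstrassCurve.Affine.Point.some _ _ h₂ := by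
  subst hx; subst hy; rfl

open Classical in
/-- K = ℚ(√(-7)); the given point is a torsion point of order 11. -/
theorem stmt_3 {K : Type*} [Field K] [Algebra ℚ K] (s : K) (hs : s ^ 2 = -7)
    (hK : ∀ x : K, ∃ a b : ℚ, x = algebraMap ℚ K a + algebraMap ℚ K b * s) :
    ∃ h : WeierstrassCurve.Affine.Nonsingular (⟨(85 + 33 * s) / 128, (89 * s - 275) / 4096, (85 * s - 999) / 16384, 0, 0⟩ : WeierstrassCurve.Affine K) (0) (0),
      addOrderOf (WeierstrassCurve.Affine.Point.some _ _ h) = 11 := by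
  haveI : CharZero K := charZero_of_injective_algebraMap (algebraMap ℚ K).injective
  haveI : Fact (Nat.Prime 11) := ⟨by norm_num⟩
  set W : WeierstrassCurve.Affine K :=
    ⟨(85 + 33 * s) / 128, (89 * s - 275) / 4096, (85 * s - 999) / 16384, 0, 0⟩ with hW
  have key : ∀ A B : K, A ^ 2 + 7 * B ^ 2 ≠ 0 → A + B * s ≠ 0 := by
    intro A B hN h
    exact hN (by linear_combination (A - B * s) * h + B ^ 2 * hs)
  -- nonzero facts
  have hy0 : (0 : K) ≠ W.negY 0 0 := by
    rw [WeierstrassCurve.Affine.negY]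
    intro h
    exact key (-999) 85 (by norm_num) (by linear_combination (16384 : K) * h)
  have hx21 : (275 - 89 * s) / 4096 ≠ (0 : K) := fun h =>
    key 275 (-89) (by norm_num) (by linear_combination (4096 : K) * h)
  have hx32 : (47 - 45 * s) / 512 ≠ (275 - 89 * s) / 4096 := fun h =>
    key 101 (-271) (by norm_num) (by linear_combination (4096 : K) * h)
  have hx51 : (47 - 45 * s) / 1024 ≠ (0 : K) := fun h =>
    key 47 (-45) (by norm_num) (by linear_combination (1024 : K) * h)
  -- nonsingularity of the points
  have hP1 : W.Nonsingular 0 0 := by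
    rw [WeierstrassCurve.Affine.nonsingular_iff, WeierstrassCurve.Affine.equation_iff]
    refine ⟨by ring, Or.inr fun h => key (-999) 85 (by norm_num) ?_⟩
    linear_combination (16384 : K) * h
  have hP2 : W.Nonsingular ((275 - 89 * s) / 4096) ((-5983 - 2115 * s) / 262144) := by
    rw [WeierstrassCurve.Affine.nonsingular_iff, WeierstrassCurve.Affine.equation_iff]
    refine ⟨by linear_combination ((17572071 / 137438953472 : K) + (6211755 / 137438953472 : K) * s) * hs,
      Or.inr fun h => key (-5983) (-2115) (by norm_num) ?_⟩
    linear_combination (262144 : K) * h + (2937 / 2 : K) * hs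
  have hP3 : W.Nonsingular ((47 - 45 * s) / 512) ((-1201 + 627 * s) / 16384) := by
    rw [WeierstrassCurve.Affine.nonsingular_iff, WeierstrassCurve.Affine.equation_iff]
    refine ⟨by linear_combination ((49533 / 67108864 : K) + (-23895 / 67108864 : K) * s) * hs,
      Or.inr fun h => key 393 1541 (by norm_num) ?_⟩
    linear_combination (32768 : K) * h + (1485 / 2 : K) * hs
  have hP5 : W.Nonsingular ((47 - 45 * s) / 1024) ((-999 + 85 * s) / 32768) := by
    rw [WeierstrassCurve.Affine.nonsingular_iff, WeierstrassCurve.Affine.equation_iff]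
    refine ⟨by linear_combination ((584085 / 2147483648 : K) + (29025 / 2147483648 : K) * s) * hs,
      Or.inr fun h => key (-797) (-457) (by norm_num) ?_⟩
    linear_combination (65536 : K) * h + (1485 / 2 : K) * hs
  have hP6 : W.Nonsingular ((47 - 45 * s) / 1024) ((-1201 + 627 * s) / 65536) := by
    rw [WeierstrassCurve.Affine.nonsingular_iff, WeierstrassCurve.Affine.equation_iff]
    refine ⟨by linear_combination ((1152795 / 8589934592 : K) + (-562545 / 8589934592 : K) * s) * hs,
      Or.inr fun h => key 797 457 (by norm_num) ?_⟩
    linear_combination (65536 : K) * h + (1485 / 2 : K) * hs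
  -- slopes
  have hL1 : W.slope 0 0 0 0 = 0 := by
    rw [WeierstrassCurve.Affine.slope_of_Y_ne rfl hy0, div_eq_iff (sub_ne_zero.mpr hy0)]
    ring
  have hL2 : W.slope ((275 - 89 * s) / 4096) 0 ((-5983 - 2115 * s) / 262144) 0
      = (-5 - 17 * s) / 128 := by
    rw [WeierstrassCurve.Affine.slope_of_X_ne hx21,
      div_eq_iff (sub_ne_zero.mpr (by simpa using hx21))]
    linear_combination (-1513 / 524288 : K) * hs
  have hL3 : W.slope ((47 - 45 * s) / 512) ((275 - 89 * s) / 4096)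
      ((-1201 + 627 * s) / 16384) ((-5983 - 2115 * s) / 262144) = (-93 - 9 * s) / 128 := by
    rw [WeierstrassCurve.Affine.slope_of_X_ne hx32,
      div_eq_iff (sub_ne_zero.mpr hx32)]
    linear_combination (-2439 / 524288 : K) * hs
  have hL5 : W.slope ((47 - 45 * s) / 1024) 0 ((-999 + 85 * s) / 32768) 0
      = (-9 - 5 * s) / 64 := by
    rw [WeierstrassCurve.Affine.slope_of_X_ne hx51,
      div_eq_iff (sub_ne_zero.mpr (by simpa using hx51))]
    linear_combination (-225 / 65536 : K) * hs
  -- addition steps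
  have e2 : WeierstrassCurve.Affine.Point.some _ _ hP1 + WeierstrassCurve.Affine.Point.some _ _ hP1
      = WeierstrassCurve.Affine.Point.some _ _ hP2 := by
    rw [WeierstrassCurve.Affine.Point.add_self_of_Y_ne hy0]
    refine some_congr' ?_ ?_
    · rw [hL1]
      simp only [WeierstrassCurve.Affine.addX]
      ring
    · rw [hL1]
      simp only [WeierstrassCurve.Affine.addY, WeierstrassCurve.Affine.negAddY,
        WeierstrassCurve.Affine.addX, WeierstrassCurve.Affine.negY]
      linear_combination (2937 / 524288 : K) * hs
  have e3 : WeierstrassCurve.Affine.Point.some _ _ hP2 + WeierstrassCurve.Affine.Point.some _ _ hP1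
      = WeierstrassCurve.Affine.Point.some _ _ hP3 := by
    rw [WeierstrassCurve.Affine.Point.add_of_X_ne hx21]
    refine some_congr' ?_ ?_
    · rw [hL2]
      simp only [WeierstrassCurve.Affine.addX]
      linear_combination (-17 / 1024 : K) * hs
    · rw [hL2]
      simp only [WeierstrassCurve.Affine.addY, WeierstrassCurve.Affine.negAddY,
        WeierstrassCurve.Affine.addX, WeierstrassCurve.Affine.negY]
      linear_combination ((12713 / 524288 : K) + (17 / 8192 : K) * s) * hs
  have e5 : WeierstrassCurve.Affine.Point.some _ _ hP3 + WeierstrassCurve.Affine.Point.some _ _ hP2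
      = WeierstrassCurve.Affine.Point.some _ _ hP5 := by
    rw [WeierstrassCurve.Affine.Point.add_of_X_ne hx32]
    refine some_congr' ?_ ?_
    · rw [hL3]
      simp only [WeierstrassCurve.Affine.addX]
      linear_combination (-27 / 2048 : K) * hs
    · rw [hL3]
      simp only [WeierstrassCurve.Affine.addY, WeierstrassCurve.Affine.negAddY,
        WeierstrassCurve.Affine.addX, WeierstrassCurve.Affine.negY]
      linear_combination ((891 / 65536 : K) + (81 / 32768 : K) * s) * hs
  have e6 : WeierstrassCurve.Affine.Point.some _ _ hP5 + WeierstrassCurve.Affine.Point.some _ _ hP1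
      = WeierstrassCurve.Affine.Point.some _ _ hP6 := by
    rw [WeierstrassCurve.Affine.Point.add_of_X_ne hx51]
    refine some_congr' ?_ ?_
    · rw [hL5]
      simp only [WeierstrassCurve.Affine.addX]
      linear_combination (-115 / 8192 : K) * hs
    · rw [hL5]
      simp only [WeierstrassCurve.Affine.addY, WeierstrassCurve.Affine.negAddY,
        WeierstrassCurve.Affine.addX, WeierstrassCurve.Affine.negY]
      linear_combination ((19585 / 1048576 : K) + (2645 / 1048576 : K) * s) * hs
  have e11 : WeierstrassCurve.Affine.Point.some _ _ hP5 + WeierstrassCurve.Affine.Point.some _ _ hP6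
      = 0 := by
    refine WeierstrassCurve.Affine.Point.add_of_Y_eq rfl ?_
    rw [WeierstrassCurve.Affine.negY]
    linear_combination (-1485 / 131072 : K) * hs
  -- order computation
  have s2 : (2 : ℕ) • WeierstrassCurve.Affine.Point.some _ _ hP1
      = WeierstrassCurve.Affine.Point.some _ _ hP2 := by rw [two_nsmul, e2]
  have s3 : (3 : ℕ) • WeierstrassCurve.Affine.Point.some _ _ hP1
      = WeierstrassCurve.Affine.Point.some _ _ hP3 := by
    rw [show (3 : ℕ) = 2 + 1 from rfl, add_nsmul, one_nsmul, s2, e3]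
  have s5 : (5 : ℕ) • WeierstrassCurve.Affine.Point.some _ _ hP1
      = WeierstrassCurve.Affine.Point.some _ _ hP5 := by
    rw [show (5 : ℕ) = 3 + 2 from rfl, add_nsmul, s3, s2, e5]
  have s6 : (6 : ℕ) • WeierstrassCurve.Affine.Point.some _ _ hP1
      = WeierstrassCurve.Affine.Point.some _ _ hP6 := by
    rw [show (6 : ℕ) = 5 + 1 from rfl, add_nsmul, one_nsmul, s5, e6]
  have s11 : (11 : ℕ) • WeierstrassCurve.Affine.Point.some _ _ hP1 = 0 := by
    rw [show (11 : ℕ) = 5 + 6 from rfl, add_nsmul, s5, s6, e11]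
  exact ⟨hP1, addOrderOf_eq_prime s11 (WeierstrassCurve.Affine.Point.some_ne_zero hP1)⟩
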